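/- If P and Q are disjoint lattice polytopes contained in [0,k]^d, then d(P,Q) ≥ ε(m,k), where m = dim(aff(P ∪ Q)) is the dimension of the affine hull of P ∪ Q and ε(m,k) is the minimal distance between two disjoint lattice polytopes in [0,k]^m. -/

import Mathlib

/-- A lattice (d,k)-polytope: the convex hull of a finite nonempty set of integer
points contained in the hypercube [0,k]^d. -/
def IsLatticePolytope (d k : ℕ) (P : Set (EuclideanSpace ℝ (Fin d))) : Prop :=
  ∃ V : Finset (EuclideanSpace ℝ (Fin d)), V.Nonempty ∧
    (∀ v ∈ V, ∀ i, (∃ z : ℤ, v i = z) ∧ 0 ≤ v i ∧ v i ≤ k) ∧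
    P = convexHull ℝ (V : Set (EuclideanSpace ℝ (Fin d)))

/-- ε(m,k): the smallest possible distance between two disjoint lattice
(m,k)-polytopes. -/
noncomputable def eps (m k : ℕ) : ℝ :=
  sInf {r | ∃ P Q : Set (EuclideanSpace ℝ (Fin m)),
    IsLatticePolytope m k P ∧ IsLatticePolytope m k Q ∧ P ∩ Q = ∅ ∧
    r = sInf (Set.image2 dist P Q)}

section AuxStmt7
open Module Set
noncomputable section

/-- The `i`-th coordinate functional on Euclidean space. -/
def coordL (d : ℕ) (i : Fin d) : EuclideanSpace ℝ (Fin d) →ₗ[ℝ] ℝ where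
  toFun x := x i
  map_add' _ _ := rfl
  map_smul' _ _ := rfl

lemma exists_coords (d : ℕ) (W : Submodule ℝ (EuclideanSpace ℝ (Fin d))) :
    ∃ σ : Fin (Module.finrank ℝ W) → Fin d, Function.Injective σ ∧
      ∀ w ∈ W, (∀ j, w (σ j) = (0 : ℝ)) → w = 0 := by
  classical
  set f : Fin d → Module.Dual ℝ W := fun i => (coordL d i).comp W.subtype with hf
  have hspan : Submodule.span ℝ (Set.range f) = ⊤ := by
    rw [eq_top_iff]
    intro K _
    apply mem_span_of_iInf_ker_le_ker (L := f)
    intro w hw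
    simp only [Submodule.mem_iInf, LinearMap.mem_ker] at hw
    have hw0 : w = 0 := by
      ext i
      exact hw i
    simp [hw0]
  obtain ⟨s, hs_sub, hs_span, hs_li⟩ := exists_linearIndependent ℝ (Set.range f)
  rw [hspan] at hs_span
  have hsfin : s.Finite := (Set.finite_range f).subset hs_sub
  haveI : Fintype s := hsfin.fintype
  let b : Basis s ℝ (Module.Dual ℝ W) := Basis.mk hs_li (by
    rw [Subtype.range_coe, hs_span])
  have hcard : Fintype.card s = Module.finrank ℝ W := by
    rw [← Module.finrank_eq_card_basis b, Subspace.dual_finrank_eq]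
  let e : Fin (Module.finrank ℝ W) ≃ s := (Fintype.equivFinOfCardEq hcard).symm
  have hchoice : ∀ j, ∃ i, f i = (e j : Module.Dual ℝ W) := fun j => hs_sub (e j).2
  choose σ hσ using hchoice
  refine ⟨σ, ?_, ?_⟩
  · intro j₁ j₂ h
    have : (e j₁ : Module.Dual ℝ W) = (e j₂ : Module.Dual ℝ W) := by
      rw [← hσ j₁, ← hσ j₂, h]
    exact e.injective (Subtype.ext this)
  · intro w hw hcoord
    set w' : W := ⟨w, hw⟩ with hw'
    have hs0 : ∀ g ∈ s, g w' = 0 := by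
      intro g hg
      have : g = (e (e.symm ⟨g, hg⟩) : Module.Dual ℝ W) := by simp
      rw [this, ← hσ]
      exact hcoord _
    have hall : ∀ K : Module.Dual ℝ W, K w' = 0 := by
      intro K
      have hK : K ∈ Submodule.span ℝ s := hs_span ▸ Submodule.mem_top
      induction hK using Submodule.span_induction with
      | mem g hg => exact hs0 g hg
      | zero => simp
      | add g₁ g₂ _ _ h1 h2 => simp [h1, h2]
      | smul c g _ h => simp [h]
    have : ∀ i, w i = 0 := fun i => hall (f i)
    ext i
    exact this i

/-- coordinate-selection linear map -/
noncomputable def projσ {d m : ℕ} (σ : Fin m → Fin d) :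
    EuclideanSpace ℝ (Fin d) →ₗ[ℝ] EuclideanSpace ℝ (Fin m) where
  toFun x := WithLp.toLp 2 (fun j => x (σ j))
  map_add' _ _ := rfl
  map_smul' _ _ := rfl

end
end AuxStmt7

/-- If P and Q are disjoint lattice (d,k)-polytopes, then
d(P,Q) ≥ ε(m,k) where m = dim(aff(P ∪ Q)). -/
theorem stmt_7 (d k : ℕ) (hd : 1 ≤ d) (hk : 1 ≤ k)
    (P Q : Set (EuclideanSpace ℝ (Fin d)))
    (hP : IsLatticePolytope d k P) (hQ : IsLatticePolytope d k Q)
    (hdisj : P ∩ Q = ∅) :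
    eps (Module.finrank ℝ (affineSpan ℝ (P ∪ Q)).direction) k
      ≤ sInf (Set.image2 dist P Q) := by
  classical
  obtain ⟨V, hVne, hVb, hPdef⟩ := hP
  obtain ⟨U, hUne, hUb, hQdef⟩ := hQ
  set W := (affineSpan ℝ (P ∪ Q)).direction with hW
  set m := Module.finrank ℝ W with hm
  obtain ⟨σ, hσinj, hker⟩ := exists_coords d W
  set π := projσ σ with hπ
  -- π is 1-Lipschitz
  have hπ_apply : ∀ (x : EuclideanSpace ℝ (Fin d)) (j : Fin m), π x j = x (σ j) :=
    fun _ _ => rfl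
  have hlip : ∀ x y : EuclideanSpace ℝ (Fin d), dist (π x) (π y) ≤ dist x y := by
    intro x y
    rw [EuclideanSpace.dist_eq, EuclideanSpace.dist_eq]
    apply Real.sqrt_le_sqrt
    have h1 : ∑ j : Fin m, dist (π x j) (π y j) ^ 2
        = ∑ i ∈ Finset.univ.image σ, dist (x i) (y i) ^ 2 := by
      rw [Finset.sum_image (fun a _ b _ h => hσinj h)]
      rfl
    rw [h1]
    exact Finset.sum_le_sum_of_subset_of_nonneg (Finset.subset_univ _)
      (fun i _ _ => sq_nonneg _)
  -- π is injective on pairs from P × Q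
  have hinj : ∀ p ∈ P, ∀ q ∈ Q, π p = π q → p = q := by
    intro p hp q hq hpq
    have hp' : p ∈ affineSpan ℝ (P ∪ Q) := subset_affineSpan ℝ _ (Or.inl hp)
    have hq' : q ∈ affineSpan ℝ (P ∪ Q) := subset_affineSpan ℝ _ (Or.inr hq)
    have hmem : p - q ∈ W := by
      simpa using AffineSubspace.vsub_mem_direction hp' hq'
    have h0 : p - q = 0 := by
      apply hker _ hmem
      intro j
      have : π p j = π q j := by rw [hpq]
      rw [hπ_apply, hπ_apply] at this
      simp [PiLp.sub_apply, this]
    rw [sub_eq_zero] at h0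
    exact h0
  -- images
  set P' : Set (EuclideanSpace ℝ (Fin m)) := π '' P with hP'
  set Q' : Set (EuclideanSpace ℝ (Fin m)) := π '' Q with hQ'
  have himg : ∀ (S : Finset (EuclideanSpace ℝ (Fin d))),
      π '' (convexHull ℝ (S : Set (EuclideanSpace ℝ (Fin d))))
        = convexHull ℝ ((S.image π : Finset (EuclideanSpace ℝ (Fin m))) :
            Set (EuclideanSpace ℝ (Fin m))) := by
    intro S
    rw [π.image_convexHull, Finset.coe_image]
  have hlatP' : IsLatticePolytope m k P' := by
    refine ⟨V.image π, hVne.image π, ?_, by rw [hP', hPdef, himg]⟩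
    intro v hv j
    obtain ⟨w, hw, rfl⟩ := Finset.mem_image.1 hv
    exact (hVb w hw (σ j))
  have hlatQ' : IsLatticePolytope m k Q' := by
    refine ⟨U.image π, hUne.image π, ?_, by rw [hQ', hQdef, himg]⟩
    intro v hv j
    obtain ⟨w, hw, rfl⟩ := Finset.mem_image.1 hv
    exact (hUb w hw (σ j))
  have hdisj' : P' ∩ Q' = ∅ := by
    rw [Set.eq_empty_iff_forall_notMem]
    rintro y ⟨⟨p, hp, rfl⟩, ⟨q, hq, hqe⟩⟩
    have : p = q := hinj p hp q hq hqe.symm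
    subst this
    have : p ∈ P ∩ Q := ⟨hp, hq⟩
    rw [hdisj] at this
    exact this
  -- nonemptiness
  have hPne : P.Nonempty := by
    rw [hPdef]
    exact (Finset.coe_nonempty.2 hVne).mono (subset_convexHull ℝ _)
  have hQne : Q.Nonempty := by
    rw [hQdef]
    exact (Finset.coe_nonempty.2 hUne).mono (subset_convexHull ℝ _)
  set r₀ := sInf (Set.image2 dist P' Q') with hr₀
  have hmemS : r₀ ∈ {r | ∃ A B : Set (EuclideanSpace ℝ (Fin m)),
      IsLatticePolytope m k A ∧ IsLatticePolytope m k B ∧ A ∩ B = ∅ ∧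
      r = sInf (Set.image2 dist A B)} := ⟨P', Q', hlatP', hlatQ', hdisj', rfl⟩
  have hbdd : ∀ r ∈ {r | ∃ A B : Set (EuclideanSpace ℝ (Fin m)),
      IsLatticePolytope m k A ∧ IsLatticePolytope m k B ∧ A ∩ B = ∅ ∧
      r = sInf (Set.image2 dist A B)}, (0:ℝ) ≤ r := by
    rintro r ⟨A, B, _, _, _, rfl⟩
    exact Real.sInf_nonneg (by rintro x ⟨a, _, b, _, rfl⟩; exact dist_nonneg)
  have h1 : eps m k ≤ r₀ := csInf_le ⟨0, hbdd⟩ hmemS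
  have h2 : r₀ ≤ sInf (Set.image2 dist P Q) := by
    apply le_csInf (hPne.image2 hQne)
    rintro b ⟨p, hp, q, hq, rfl⟩
    calc r₀ ≤ dist (π p) (π q) :=
          csInf_le ⟨0, by rintro x ⟨a, _, b, _, rfl⟩; exact dist_nonneg⟩
            (Set.mem_image2_of_mem ⟨p, hp, rfl⟩ ⟨q, hq, rfl⟩)
      _ ≤ dist p q := hlip p q
  exact h1.trans h2
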